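/- For F = (f₀,f₁) and G = (g₀,g₁) in V_a, define T F(p) := ω(p)^{−1/2}·𝓕f₀(p) + 𝐢·ω(p)^{1/2}·𝓕f₁(p) (for p ≠ 0). Then the function p ↦ conj(T F(p))·T G(p) is integrable on ℝ, and the imaginary part of ∫_ℝ conj(T F(p))·T G(p) dp equals σ(F,G) = ∫_ℝ (f₀g₁ − f₁g₀) dx. (The symplectic form is the imaginary part of the one-particle Hilbert space inner product defining the Fock representation.) -/

import Mathlib

open MeasureTheory Filter Topology Real
open scoped FourierTransform ComplexConjugate

/-- The one-particle map `T F(p) = ω(p)^{-1/2}·𝓕f₀(p) + i·ω(p)^{1/2}·𝓕f₁(p)`,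
with `ω(p) = 2π|p|`. -/
noncomputable def oneParticle (f₀ f₁ : ℝ → ℝ) (p : ℝ) : ℂ :=
  (((2 * π * |p|) ^ (-(1/2 : ℝ)) : ℝ) : ℂ) * 𝓕 (fun x : ℝ => (f₀ x : ℂ)) p
  + Complex.I * (((2 * π * |p|) ^ ((1/2 : ℝ)) : ℝ) : ℂ) * 𝓕 (fun x : ℝ => (f₁ x : ℂ)) p

namespace Stmt9Aux

open Complex SchwartzMap

/-- Complexification of a real Schwartz function. -/
noncomputable def cplx (f : 𝓢(ℝ, ℝ)) : 𝓢(ℝ, ℂ) :=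
  SchwartzMap.bilinLeftCLM ((ContinuousLinearMap.mul ℝ ℂ).comp Complex.ofRealCLM)
    (Function.HasTemperateGrowth.const (1 : ℂ)) f

@[simp] lemma cplx_apply (f : 𝓢(ℝ, ℝ)) (x : ℝ) : cplx f x = (f x : ℂ) := by
  show ((f x : ℂ)) * 1 = (f x : ℂ); ring

lemma coe_cplx (f : 𝓢(ℝ, ℝ)) : (fun x => (f x : ℂ)) = ⇑(cplx f) :=
  funext fun x => (cplx_apply f x).symm

lemma conj_fourier (f : 𝓢(ℝ, ℝ)) (p : ℝ) :
    conj (𝓕 (⇑(cplx f)) p) = 𝓕 (⇑(cplx f)) (-p) := by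
  rw [← Real.fourierInv_eq_fourier_neg, Real.fourier_eq',
    Real.fourierInv_eq', ← integral_conj]
  congr 1
  ext x
  simp only [smul_eq_mul, map_mul, cplx_apply, Complex.conj_ofReal, ← Complex.exp_conj,
    Complex.conj_I, mul_neg, neg_mul, neg_neg]
  push_cast
  ring_nf

lemma deriv_cplx (f : 𝓢(ℝ, ℝ)) :
    deriv (⇑(cplx f)) = ⇑(cplx (derivCLM ℝ ℝ f)) := by
  ext x
  have h1 : HasDerivAt (fun x => ((f x : ℝ) : ℂ)) ((deriv (⇑f) x : ℝ) : ℂ) x :=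
    (f.differentiableAt.hasDerivAt).ofReal_comp
  rw [show ⇑(cplx f) = fun x => ((f x : ℝ) : ℂ) from (coe_cplx f).symm]
  rw [h1.deriv, cplx_apply, derivCLM_apply]

lemma fourier_deriv (f : 𝓢(ℝ, ℝ)) (p : ℝ) :
    𝓕 (fun x => ((deriv (⇑f)) x : ℂ)) p = (2 * π * Complex.I * p) * 𝓕 (⇑(cplx f)) p := by
  have h1 : (fun x => ((deriv (⇑f)) x : ℂ)) = deriv (⇑(cplx f)) := by
    rw [deriv_cplx]; ext x; simp [derivCLM_apply]
  rw [h1, Real.fourier_deriv (cplx f).integrable (cplx f).differentiable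
    (by rw [deriv_cplx]; exact (cplx (derivCLM ℝ ℝ f)).integrable)]
  simp [smul_eq_mul]

lemma fourier_cplx_deriv (f : 𝓢(ℝ, ℝ)) (p : ℝ) :
    𝓕 (⇑(cplx (derivCLM ℝ ℝ f))) p = (2 * π * Complex.I * p) * 𝓕 (⇑(cplx f)) p := by
  rw [← fourier_deriv]
  refine congrArg (fun g : ℝ → ℂ => 𝓕 g p) ?_
  ext x
  simp [derivCLM_apply]

lemma parseval (f g : 𝓢(ℝ, ℂ)) :
    ∫ p, 𝓕⁻ (⇑f) p * 𝓕 (⇑g) p = ∫ x, f x * g x := by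
  set A : 𝓢(ℝ, ℂ) := (FourierTransform.fourierCLE ℂ 𝓢(ℝ, ℂ)).symm f with hA
  have hAc : ⇑A = 𝓕⁻ (⇑f) := by
    rw [hA, FourierTransform.fourierCLE_symm_apply]; exact SchwartzMap.fourierInv_coe f
  have hFA : 𝓕 (⇑A) = ⇑f := by
    have := (FourierTransform.fourierCLE ℂ 𝓢(ℝ, ℂ)).apply_symm_apply f
    calc 𝓕 (⇑A) = ⇑(FourierTransform.fourierCLE ℂ 𝓢(ℝ, ℂ) A) :=
          (SchwartzMap.fourier_coe A).symm
      _ = ⇑f := by rw [this]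
  have flipEq : (innerₗ ℝ).flip = innerₗ ℝ :=
    LinearMap.ext fun x => LinearMap.ext fun y => real_inner_comm x y
  have key := VectorFourier.integral_fourierIntegral_smul_eq_flip (L := innerₗ ℝ)
    (μ := volume) (ν := volume) Real.continuous_fourierChar continuous_inner
    g.integrable A.integrable
  rw [flipEq] at key
  have key2 : ∫ p, 𝓕 (⇑g) p * A p = ∫ x, g x * 𝓕 (⇑A) x := key
  rw [hFA] at key2
  calc ∫ p, 𝓕⁻ (⇑f) p * 𝓕 (⇑g) p = ∫ p, 𝓕 (⇑g) p * A p := by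
        simp_rw [hAc, mul_comm]
    _ = ∫ x, g x * f x := key2
    _ = ∫ x, f x * g x := by simp_rw [mul_comm]

lemma parseval_real (a b : 𝓢(ℝ, ℝ)) :
    ∫ p, conj (𝓕 (⇑(cplx a)) p) * 𝓕 (⇑(cplx b)) p = ((∫ x, a x * b x : ℝ) : ℂ) := by
  have h1 : ∀ p, conj (𝓕 (⇑(cplx a)) p) = 𝓕⁻ (⇑(cplx a)) p := by
    intro p
    rw [conj_fourier, Real.fourierInv_eq_fourier_neg]
  simp only [h1]
  rw [parseval (cplx a) (cplx b)]
  simp only [cplx_apply, ← Complex.ofReal_mul]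
  exact integral_ofReal

/-- Weighted integrability. -/
lemma integrable_weight_mul (U V : 𝓢(ℝ, ℂ)) :
    Integrable (fun p => ((2 * π * |p| : ℝ) : ℂ) * (conj (U p) * V p)) := by
  have hC : ∀ p : ℝ, ‖V p‖ ≤ (SchwartzMap.seminorm ℝ 0 0) V := fun p =>
    SchwartzMap.norm_le_seminorm ℝ V p
  refine Integrable.mono'
    (((U.integrable_pow_mul volume 1).const_mul (2 * π * ((SchwartzMap.seminorm ℝ 0 0) V))) :
      Integrable (fun p : ℝ => 2 * π * ((SchwartzMap.seminorm ℝ 0 0) V) * (‖p‖ ^ 1 * ‖U p‖)))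
    ?_ ?_
  · exact ((Complex.continuous_ofReal.comp (continuous_const.mul _root_.continuous_abs)).mul
      ((U.continuous.star).mul V.continuous)).aestronglyMeasurable
  · filter_upwards with p
    rw [norm_mul, norm_mul, RCLike.norm_conj, Complex.norm_real, Real.norm_eq_abs]
    have h2 : |(2 * π * |p| : ℝ)| = 2 * π * |p| := by
      rw [_root_.abs_of_nonneg]; positivity
    rw [h2]
    have := hC p
    have hU : (0:ℝ) ≤ ‖U p‖ := norm_nonneg _
    have hπ : (0:ℝ) < π := Real.pi_pos
    calc 2 * π * |p| * (‖U p‖ * ‖V p‖)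
        ≤ 2 * π * |p| * (‖U p‖ * ((SchwartzMap.seminorm ℝ 0 0) V)) := by gcongr
      _ = 2 * π * ((SchwartzMap.seminorm ℝ 0 0) V) * (‖p‖ ^ 1 * ‖U p‖) := by
          rw [Real.norm_eq_abs]; ring

lemma integrable_conj_mul (U V : 𝓢(ℝ, ℂ)) :
    Integrable (fun p => conj (U p) * V p) := by
  refine (V.integrable).bdd_mul (c := (SchwartzMap.seminorm ℝ 0 0) U) ?_ ?_
  · exact (U.continuous.star).aestronglyMeasurable
  · filter_upwards with p
    rw [RCLike.norm_conj]
    exact SchwartzMap.norm_le_seminorm ℝ U p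

/-- The diagonal (weighted) terms have purely real integral. -/
lemma im_weight_integral (a b : 𝓢(ℝ, ℝ)) :
    (∫ p, ((2 * π * |p| : ℝ) : ℂ) * (conj (𝓕 (⇑(cplx a)) p) * 𝓕 (⇑(cplx b)) p)).im = 0 := by
  set T : ℝ → ℂ := fun p => ((2 * π * |p| : ℝ) : ℂ) * (conj (𝓕 (⇑(cplx a)) p) * 𝓕 (⇑(cplx b)) p)
    with hT
  have hconj : ∀ p, conj (T p) = T (-p) := by
    intro p
    simp only [hT, map_mul, Complex.conj_ofReal, abs_neg, ← conj_fourier, RCLike.conj_conj]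
    try ring
  have : conj (∫ p, T p) = ∫ p, T p := by
    rw [← integral_conj]
    simp_rw [hconj]
    exact integral_neg_eq_self T volume
  have h2 := Complex.conj_eq_iff_im.mp this
  exact h2

end Stmt9Aux

open Stmt9Aux Complex SchwartzMap

/-- For `F = (f₀,f₁), G = (g₀,g₁) ∈ V_a = ∂𝒮 × 𝒮`, the function
`p ↦ conj(T F(p))·T G(p)` is integrable on ℝ and the imaginary part of its integral
equals `σ(F,G) = ∫ (f₀ g₁ − f₁ g₀)`: the symplectic form is the imaginary part of the
one-particle inner product defining the Fock representation. -/
theorem stmt_9 (h₀ f₁ k₀ g₁ : SchwartzMap ℝ ℝ) :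
    Integrable (fun p : ℝ =>
      conj (oneParticle (deriv ⇑h₀) ⇑f₁ p) * oneParticle (deriv ⇑k₀) ⇑g₁ p) ∧
    (∫ p : ℝ,
      conj (oneParticle (deriv ⇑h₀) ⇑f₁ p) * oneParticle (deriv ⇑k₀) ⇑g₁ p).im =
      ∫ x, (deriv h₀ x * g₁ x - f₁ x * deriv k₀ x) := by
  classical
  set h₀' := derivCLM ℝ ℝ h₀ with hh₀'
  set k₀' := derivCLM ℝ ℝ k₀ with hk₀'
  -- the three pieces
  set W1 : ℝ → ℂ := fun p =>
    ((2 * π * |p| : ℝ) : ℂ) * (conj (𝓕 (⇑(cplx h₀)) p) * 𝓕 (⇑(cplx k₀)) p) with hW1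
  set W2 : ℝ → ℂ := fun p =>
    ((2 * π * |p| : ℝ) : ℂ) * (conj (𝓕 (⇑(cplx f₁)) p) * 𝓕 (⇑(cplx g₁)) p) with hW2
  set Cr : ℝ → ℂ := fun p =>
    Complex.I * (conj (𝓕 (⇑(cplx h₀')) p) * 𝓕 (⇑(cplx g₁)) p
      - conj (𝓕 (⇑(cplx f₁)) p) * 𝓕 (⇑(cplx k₀')) p) with hCr
  -- pointwise identity away from 0
  have pointwise : ∀ p : ℝ, p ≠ 0 →
      conj (oneParticle (deriv ⇑h₀) ⇑f₁ p) * oneParticle (deriv ⇑k₀) ⇑g₁ p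
        = W1 p + W2 p + Cr p := by
    intro p hp
    have ht : (0:ℝ) < 2 * π * |p| := by
      have := Real.pi_pos
      have : (0:ℝ) < |p| := abs_pos.mpr hp
      positivity
    set t : ℝ := 2 * π * |p| with hts
    have htne : t ≠ 0 := ne_of_gt ht
    -- rpow facts
    have r1 : t ^ (-(1/2 : ℝ)) * t ^ ((1/2 : ℝ)) = 1 := by
      rw [← Real.rpow_add ht]; norm_num
    have r2 : t ^ ((1/2 : ℝ)) * t ^ ((1/2 : ℝ)) = t := by
      rw [← Real.rpow_add ht]; norm_num
    have r3 : t ^ (-(1/2 : ℝ)) * t ^ (-(1/2 : ℝ)) * t * t = t := by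
      rw [← Real.rpow_add ht]
      norm_num
      rw [Real.rpow_neg_one]
      field_simp
    have e1 : ((t ^ (-(1/2 : ℝ)) : ℝ) : ℂ) * ((t ^ ((1/2 : ℝ)) : ℝ) : ℂ) = 1 := by
      exact_mod_cast congrArg Complex.ofReal r1
    have e2 : ((t ^ ((1/2 : ℝ)) : ℝ) : ℂ) * ((t ^ ((1/2 : ℝ)) : ℝ) : ℂ) = ((t:ℝ):ℂ) := by
      exact_mod_cast congrArg Complex.ofReal r2
    have e3 : ((t ^ (-(1/2 : ℝ)) : ℝ) : ℂ) * ((t ^ (-(1/2 : ℝ)) : ℝ) : ℂ) * ((t:ℝ):ℂ)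
        * ((t:ℝ):ℂ) = ((t:ℝ):ℂ) := by
      exact_mod_cast congrArg Complex.ofReal r3
    have habs : ((|p| : ℝ) : ℂ) * ((|p| : ℝ) : ℂ) = (p : ℂ) * (p : ℂ) := by
      exact_mod_cast congrArg Complex.ofReal (abs_mul_abs_self p)
    have e4 : (2 * (π:ℂ) * Complex.I * (p:ℂ)) * (2 * (π:ℂ) * Complex.I * (p:ℂ))
        = -(((t:ℝ):ℂ) * ((t:ℝ):ℂ)) := by
      rw [hts]
      push_cast
      linear_combination (4 * (π:ℂ)^2 * (p:ℂ) * (p:ℂ)) * Complex.I_mul_I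
        + (4 * (π:ℂ)^2) * habs
    -- rewrite the Fourier transforms
    have hf0 : 𝓕 (fun x => ((deriv (⇑h₀)) x : ℂ)) p
        = (2 * π * Complex.I * p) * 𝓕 (⇑(cplx h₀)) p := fourier_deriv h₀ p
    have hg0 : 𝓕 (fun x => ((deriv (⇑k₀)) x : ℂ)) p
        = (2 * π * Complex.I * p) * 𝓕 (⇑(cplx k₀)) p := fourier_deriv k₀ p
    have hF0 : 𝓕 (⇑(cplx h₀')) p = (2 * π * Complex.I * p) * 𝓕 (⇑(cplx h₀)) p :=
      fourier_cplx_deriv h₀ p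
    have hG0 : 𝓕 (⇑(cplx k₀')) p = (2 * π * Complex.I * p) * 𝓕 (⇑(cplx k₀)) p :=
      fourier_cplx_deriv k₀ p
    simp only [hW1, hW2, hCr]
    unfold oneParticle
    rw [hf0, hg0, hF0, hG0, coe_cplx f₁, coe_cplx g₁]
    rw [← hts]
    set u := 𝓕 (⇑(cplx h₀)) p
    set v := 𝓕 (⇑(cplx k₀)) p
    set q₁ := 𝓕 (⇑(cplx f₁)) p
    set q₂ := 𝓕 (⇑(cplx g₁)) p
    set c : ℂ := 2 * (π:ℂ) * Complex.I * (p:ℂ) with hc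
    have hcc : (starRingEnd ℂ) c = -c := by
      simp only [hc, map_mul, Complex.conj_I, Complex.conj_ofReal, map_ofNat]
      ring
    simp only [map_add, map_mul, Complex.conj_I, Complex.conj_ofReal, hcc]
    linear_combination (conj u * v) * (e3 - ((t ^ (-(1/2 : ℝ)) : ℝ) : ℂ)
        * ((t ^ (-(1/2 : ℝ)) : ℝ) : ℂ) * e4)
      + (conj q₁ * q₂) * (e2 - ((t ^ ((1/2 : ℝ)) : ℝ) : ℂ) * ((t ^ ((1/2 : ℝ)) : ℝ) : ℂ)
          * Complex.I_sq)
      + (-(Complex.I * c) * (conj u * q₂ + conj q₁ * v)) * e1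
  -- integrability of the pieces
  have hIW1 : Integrable W1 :=
    integrable_weight_mul (fourierTransformCLM ℂ (cplx h₀)) (fourierTransformCLM ℂ (cplx k₀))
  have hIW2 : Integrable W2 :=
    integrable_weight_mul (fourierTransformCLM ℂ (cplx f₁)) (fourierTransformCLM ℂ (cplx g₁))
  have hICr1 : Integrable (fun p => conj (𝓕 (⇑(cplx h₀')) p) * 𝓕 (⇑(cplx g₁)) p) :=
    integrable_conj_mul (fourierTransformCLM ℂ (cplx h₀')) (fourierTransformCLM ℂ (cplx g₁))
  have hICr2 : Integrable (fun p => conj (𝓕 (⇑(cplx f₁)) p) * 𝓕 (⇑(cplx k₀')) p) :=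
    integrable_conj_mul (fourierTransformCLM ℂ (cplx f₁)) (fourierTransformCLM ℂ (cplx k₀'))
  have hICr : Integrable Cr := by
    rw [hCr]
    exact ((hICr1.sub hICr2).const_mul Complex.I)
  have hIE : Integrable (fun p => W1 p + W2 p + Cr p) := (hIW1.add hIW2).add hICr
  -- a.e. equality
  have h0ae : ∀ᵐ p : ℝ, p ≠ 0 := by
    have : ({(0:ℝ)} : Set ℝ)ᶜ ∈ ae (volume : Measure ℝ) :=
      compl_mem_ae_iff.mpr (measure_singleton 0)
    filter_upwards [this] with p hp
    simpa using hp
  have hae : (fun p : ℝ =>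
      conj (oneParticle (deriv ⇑h₀) ⇑f₁ p) * oneParticle (deriv ⇑k₀) ⇑g₁ p)
      =ᵐ[volume] fun p => W1 p + W2 p + Cr p := by
    filter_upwards [h0ae] with p hp
    exact pointwise p hp
  constructor
  · exact hIE.congr hae.symm
  · rw [integral_congr_ae hae]
    have hs1 : Integrable (fun p => W1 p + W2 p) := hIW1.add hIW2
    have hsA : (∫ p, (W1 p + W2 p) + Cr p) = (∫ p, W1 p + W2 p) + ∫ p, Cr p :=
      integral_add (f := fun p => W1 p + W2 p) (g := Cr) hs1 hICr
    have hsB : (∫ p, W1 p + W2 p) = (∫ p, W1 p) + ∫ p, W2 p :=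
      integral_add hIW1 hIW2
    rw [hsA, hsB]
    simp only [Complex.add_im]
    rw [im_weight_integral h₀ k₀, im_weight_integral f₁ g₁]
    -- cross term
    have hP1 : ∫ p, conj (𝓕 (⇑(cplx h₀')) p) * 𝓕 (⇑(cplx g₁)) p
        = ((∫ x, h₀' x * g₁ x : ℝ) : ℂ) := parseval_real h₀' g₁
    have hP2 : ∫ p, conj (𝓕 (⇑(cplx f₁)) p) * 𝓕 (⇑(cplx k₀')) p
        = ((∫ x, f₁ x * k₀' x : ℝ) : ℂ) := parseval_real f₁ k₀'
    have hCrInt : ∫ p, Cr p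
        = Complex.I * (((∫ x, h₀' x * g₁ x : ℝ) : ℂ) - ((∫ x, f₁ x * k₀' x : ℝ) : ℂ)) := by
      simp only [hCr]
      rw [integral_const_mul, integral_sub hICr1 hICr2, hP1, hP2]
    rw [hCrInt]
    -- finish
    have hint1 : Integrable (fun x => h₀' x * g₁ x) := by
      refine (g₁.integrable).bdd_mul (c := (SchwartzMap.seminorm ℝ 0 0) h₀')
        (h₀'.continuous.aestronglyMeasurable) ?_
      filter_upwards with x using SchwartzMap.norm_le_seminorm ℝ h₀' x
    have hint2 : Integrable (fun x => f₁ x * k₀' x) := by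
      have : Integrable (fun x => k₀' x * f₁ x) := by
        refine (f₁.integrable).bdd_mul (c := (SchwartzMap.seminorm ℝ 0 0) k₀')
          (k₀'.continuous.aestronglyMeasurable) ?_
        filter_upwards with x using SchwartzMap.norm_le_seminorm ℝ k₀' x
      exact this.congr (by filter_upwards with x using mul_comm _ _)
    have : (Complex.I * (((∫ x, h₀' x * g₁ x : ℝ) : ℂ) - ((∫ x, f₁ x * k₀' x : ℝ) : ℂ))).im
        = ∫ x, (h₀' x * g₁ x - f₁ x * k₀' x) := by
      rw [← Complex.ofReal_sub, Complex.mul_im, Complex.I_re, Complex.I_im,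
        Complex.ofReal_re, Complex.ofReal_im]
      rw [integral_sub hint1 hint2]
      ring
    rw [this]
    simp only [hh₀', hk₀', derivCLM_apply]
    ring_nf
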